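/- Let K ≥ 3, τ ∈ ℝ, and let (μ_k)_{k=1}^K be a nondecreasing sequence of reals with μ_1 ≤ τ ≤ μ_K. Consider the dyadic binary tree on [K], and let u be any node of this tree. Then the set A = { v : u ∈ ST(v) and τ ∈ [μ_{v(l)}, μ_{v(r)}] } is nonempty, and it contains exactly one element of maximal depth; that is, if w, q ∈ A both have maximal depth among elements of A, then w = q. -/
import Mathlib


/-- A node of the dyadic binary tree on `[K]` is a triple `(L, M, R)` of (1-based) arm
indices. -/
abbrev TreeNode := ℕ × ℕ × ℕ

/-- Root of the dyadic binary tree on `[K]`. -/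
def treeRoot (K : ℕ) : TreeNode := (1, (1 + K) / 2, K)

/-- Left child of a node `(L, M, R)`: `(L, ⌊(L+M)/2⌋, M)`. -/
def leftChild (v : TreeNode) : TreeNode := (v.1, (v.1 + v.2.1) / 2, v.2.1)

/-- Right child of a node `(L, M, R)`: `(M, ⌊(M+R)/2⌋, R)`. -/
def rightChild (v : TreeNode) : TreeNode := (v.2.1, (v.2.1 + v.2.2) / 2, v.2.2)

/-- A node `(L, M, R)` is a leaf when `R = L + 1`. -/
def IsLeaf (v : TreeNode) : Prop := v.2.2 = v.1 + 1

/-- `Desc u v d`: `v` belongs to the subtree `ST(u)` rooted at `u`, at relative depth `d`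
(children are only taken at non-leaf nodes). -/
inductive Desc : TreeNode → TreeNode → ℕ → Prop
  | refl (u : TreeNode) : Desc u u 0
  | left {u v : TreeNode} {d : ℕ} : Desc u v d → ¬IsLeaf v → Desc u (leftChild v) (d + 1)
  | right {u v : TreeNode} {d : ℕ} : Desc u v d → ¬IsLeaf v → Desc u (rightChild v) (d + 1)

/-- The set of (node, depth) pairs `(v, d)` of the dyadic tree on `[K]` such that
`u ∈ ST(v)` and `τ ∈ [μ_{v(l)}, μ_{v(r)}]`. -/
def goodAncestors (K : ℕ) (τ : ℝ) (μ : ℕ → ℝ) (u : TreeNode) : Set (TreeNode × ℕ) :=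
  {p | Desc (treeRoot K) p.1 p.2 ∧ (∃ d', Desc p.1 u d') ∧
    μ p.1.1 ≤ τ ∧ τ ≤ μ p.1.2.2}

/-- Uniqueness of the deepest good ancestor (Lemma 1): for a nondecreasing sequence of
means with `μ 1 ≤ τ ≤ μ K` and any node `u` of the dyadic tree on `[K]`, the set of nodes
`v` with `u ∈ ST(v)` and `τ ∈ [μ_{v(l)}, μ_{v(r)}]` is nonempty and contains exactly one
element of maximal depth. -/
def TreeInv (v : TreeNode) : Prop := v.2.1 = (v.1 + v.2.2) / 2 ∧ v.1 < v.2.2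

lemma treeInv_root {K : ℕ} (hK : 3 ≤ K) : TreeInv (treeRoot K) :=
  ⟨rfl, show (1:ℕ) < K by omega⟩

lemma treeInv_left {v : TreeNode} (hv : TreeInv v) (hl : ¬IsLeaf v) :
    TreeInv (leftChild v) := by
  obtain ⟨hm, hlr⟩ := hv
  simp only [IsLeaf] at hl
  exact ⟨rfl, by simp only [leftChild]; omega⟩

lemma treeInv_right {v : TreeNode} (hv : TreeInv v) (hl : ¬IsLeaf v) :
    TreeInv (rightChild v) := by
  obtain ⟨hm, hlr⟩ := hv
  simp only [IsLeaf] at hl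
  exact ⟨rfl, by simp only [rightChild]; omega⟩

lemma desc_trans {a b c : TreeNode} {d e : ℕ} (h1 : Desc a b d) (h2 : Desc b c e) :
    Desc a c (d + e) := by
  induction h2 with
  | refl => exact h1
  | left h hl ih => exact Desc.left ih hl
  | right h hl ih => exact Desc.right ih hl

lemma treeInv_desc {v w : TreeNode} {d : ℕ} (h : Desc v w d) (hv : TreeInv v) :
    TreeInv w := by
  induction h with
  | refl => exact hv
  | left h hl ih => exact treeInv_left ih hl
  | right h hl ih => exact treeInv_right ih hl

lemma subtree_subset {v u : TreeNode} {a : ℕ} (h : Desc v u a) (hv : TreeInv v) :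
    v.1 ≤ u.1 ∧ u.2.2 ≤ v.2.2 := by
  induction h with
  | refl => exact ⟨le_refl _, le_refl _⟩
  | @left x _ h hl ih =>
      have hx := treeInv_desc h hv
      obtain ⟨hm, hlr⟩ := hx
      obtain ⟨i1, i2⟩ := ih
      exact ⟨i1, by simp only [leftChild]; omega⟩
  | @right x _ h hl ih =>
      have hx := treeInv_desc h hv
      obtain ⟨hm, hlr⟩ := hx
      obtain ⟨i1, i2⟩ := ih
      exact ⟨by simp only [rightChild]; omega, i2⟩

lemma same_depth_unique {K : ℕ} (hK : 3 ≤ K) (u : TreeNode) :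
    ∀ d w q, Desc (treeRoot K) w d → Desc (treeRoot K) q d →
      (∃ a, Desc w u a) → (∃ b, Desc q u b) → w = q := by
  intro d
  induction d with
  | zero =>
      intro w q hw hq _ _
      cases hw; cases hq; rfl
  | succ d ih =>
      intro w q hw hq hwu hqu
      obtain ⟨a, hwa⟩ := hwu
      obtain ⟨b, hqb⟩ := hqu
      -- left/right disjointness as a local fact
      have disj : ∀ (v : TreeNode), Desc (treeRoot K) v d → ¬IsLeaf v →
          ∀ a b, Desc (leftChild v) u a → Desc (rightChild v) u b → False := by
        intro v hv hnl a b hA hB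
        have hinv : TreeInv v := treeInv_desc hv (treeInv_root hK)
        have hIL := treeInv_left hinv hnl
        have hIR := treeInv_right hinv hnl
        have h1 := subtree_subset hA hIL
        have h2 := subtree_subset hB hIR
        obtain ⟨-, hult⟩ := treeInv_desc hA hIL
        obtain ⟨-, -⟩ := hIL
        obtain ⟨-, -⟩ := hIR
        simp only [leftChild, rightChild] at h1 h2
        omega
      cases hw with
      | @left w' _ hw' hnl =>
          cases hq with
          | @left q' _ hq' hnl' =>
              have hwanc : ∃ a', Desc w' u a' :=
                ⟨0 + 1 + a, desc_trans (Desc.left (Desc.refl w') hnl) hwa⟩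
              have hqanc : ∃ b', Desc q' u b' :=
                ⟨0 + 1 + b, desc_trans (Desc.left (Desc.refl q') hnl') hqb⟩
              have := ih w' q' hw' hq' hwanc hqanc
              subst this; rfl
          | @right q' _ hq' hnl' =>
              have hwanc : ∃ a', Desc w' u a' :=
                ⟨0 + 1 + a, desc_trans (Desc.left (Desc.refl w') hnl) hwa⟩
              have hqanc : ∃ b', Desc q' u b' :=
                ⟨0 + 1 + b, desc_trans (Desc.right (Desc.refl q') hnl') hqb⟩
              have := ih w' q' hw' hq' hwanc hqanc
              subst this
              exact (disj w' hw' hnl a b hwa hqb).elim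
      | @right w' _ hw' hnl =>
          cases hq with
          | @left q' _ hq' hnl' =>
              have hwanc : ∃ a', Desc w' u a' :=
                ⟨0 + 1 + a, desc_trans (Desc.right (Desc.refl w') hnl) hwa⟩
              have hqanc : ∃ b', Desc q' u b' :=
                ⟨0 + 1 + b, desc_trans (Desc.left (Desc.refl q') hnl') hqb⟩
              have := ih w' q' hw' hq' hwanc hqanc
              subst this
              exact (disj w' hw' hnl b a hqb hwa).elim
          | @right q' _ hq' hnl' =>
              have hwanc : ∃ a', Desc w' u a' :=
                ⟨0 + 1 + a, desc_trans (Desc.right (Desc.refl w') hnl) hwa⟩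
              have hqanc : ∃ b', Desc q' u b' :=
                ⟨0 + 1 + b, desc_trans (Desc.right (Desc.refl q') hnl') hqb⟩
              have := ih w' q' hw' hq' hwanc hqanc
              subst this; rfl

theorem unique_deepest_good_ancestor
    (K : ℕ) (hK : 3 ≤ K) (τ : ℝ) (μ : ℕ → ℝ)
    (hmono : MonotoneOn μ (Set.Icc 1 K))
    (h1 : μ 1 ≤ τ) (hKτ : τ ≤ μ K)
    (u : TreeNode) (du : ℕ) (hu : Desc (treeRoot K) u du) :
    (goodAncestors K τ μ u).Nonempty ∧
    ∀ w q : TreeNode × ℕ,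
      w ∈ goodAncestors K τ μ u → q ∈ goodAncestors K τ μ u →
      (∀ x ∈ goodAncestors K τ μ u, x.2 ≤ w.2) →
      (∀ x ∈ goodAncestors K τ μ u, x.2 ≤ q.2) →
      w = q := by
  constructor
  · refine ⟨(treeRoot K, 0), Desc.refl _, ⟨du, hu⟩, ?_, ?_⟩
    · exact h1
    · exact hKτ
  · intro w q hw hq hmw hmq
    have hd : w.2 = q.2 := le_antisymm (hmq w hw) (hmw q hq)
    obtain ⟨hw1, hw2, -⟩ := hw
    obtain ⟨hq1, hq2, -⟩ := hq
    have hq1' : Desc (treeRoot K) q.1 w.2 := by rw [hd]; exact hq1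
    have h1 : w.1 = q.1 := same_depth_unique hK u w.2 w.1 q.1 hw1 hq1' hw2 hq2
    exact Prod.ext h1 hd
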